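/- Consider SDPs min{⟨C, X⟩ : ⟨Aᵢ, X⟩ = bᵢ, X ⪰ 0} with fixed data Aᵢ, b, a fixed feasible point X̂, and suppose at C₀ the dual has a feasible point (ζ̂, Ŝ) with Σᵢ ζ̂ᵢAᵢ + Ŝ = C₀ and all eigenvalues of Ŝ at least σ > 0. Then for any δ ∈ (0, σ/2] and any C with ‖C − C₀‖_F ≤ δ, every primal-feasible X with ⟨Ŝ + C − C₀, X⟩ ≤ ⟨Ŝ + C − C₀, X̂⟩ satisfies ‖X‖_F ≤ (2/σ)(⟨X̂, Ŝ⟩ + δ‖X̂‖_F). -/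

import Mathlib

open Matrix

noncomputable def frob {n : ℕ} (X : Matrix (Fin n) (Fin n) ℝ) : ℝ :=
  Real.sqrt (∑ i, ∑ j, (X i j) ^ 2)

lemma frob_nonneg {n : ℕ} (X : Matrix (Fin n) (Fin n) ℝ) : 0 ≤ frob X :=
  Real.sqrt_nonneg _

lemma psd_trace_nonneg {n : ℕ} {M : Matrix (Fin n) (Fin n) ℝ} (h : M.PosSemidef) :
    0 ≤ M.trace := by
  rw [Matrix.trace]
  apply Finset.sum_nonneg
  intro i _
  have := h.dotProduct_mulVec_nonneg (Pi.single i 1)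
  simpa [Matrix.mulVec_single, dotProduct, Pi.single_apply] using this

lemma psd_trace_mul_nonneg {n : ℕ} {M N : Matrix (Fin n) (Fin n) ℝ}
    (hM : M.PosSemidef) (hN : N.PosSemidef) : 0 ≤ (M * N).trace := by
  obtain ⟨D, rfl⟩ : ∃ D : Matrix (Fin n) (Fin n) ℝ, N = Dᴴ * D := by
    open scoped MatrixOrder in
    exact CStarAlgebra.nonneg_iff_eq_star_mul_self.mp hN.nonneg
  rw [← mul_assoc, Matrix.trace_mul_cycle]
  exact psd_trace_nonneg (hM.mul_mul_conjTranspose_same D)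

lemma psd_entry_sq_le {n : ℕ} {X : Matrix (Fin n) (Fin n) ℝ} (hX : X.PosSemidef)
    (i j : Fin n) : X i j ^ 2 ≤ X i i * X j j := by
  have hsym : X j i = X i j := by
    have := hX.1
    rw [Matrix.IsHermitian] at this
    conv_lhs => rw [← this]
    simp [Matrix.conjTranspose_apply]
  have key : ∀ t : ℝ, 0 ≤ X i i * (t * t) + (2 * X i j) * t + X j j := by
    intro t
    have h := hX.dotProduct_mulVec_nonneg (fun k => t * (if k = i then (1:ℝ) else 0) + (if k = j then 1 else 0))
    simp only [dotProduct, Matrix.mulVec, star_trivial, mul_ite, mul_one, mul_zero,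
      ite_mul, zero_mul, one_mul, mul_add, add_mul, Finset.sum_add_distrib,
      Finset.sum_ite_eq', Finset.mem_univ, if_true] at h
    rw [hsym] at h
    linarith
  have := discrim_le_zero key
  rw [discrim] at this
  nlinarith [this]

lemma frob_le_trace {n : ℕ} {X : Matrix (Fin n) (Fin n) ℝ} (hX : X.PosSemidef) :
    frob X ≤ X.trace := by
  have htr : 0 ≤ X.trace := psd_trace_nonneg hX
  rw [frob, show X.trace = Real.sqrt (X.trace ^ 2) from (Real.sqrt_sq htr).symm]
  apply Real.sqrt_le_sqrt
  have : X.trace ^ 2 = ∑ i, ∑ j, X i i * X j j := by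
    simp only [Matrix.trace, Matrix.diag]
    rw [sq, Finset.sum_mul_sum]
  rw [this]
  exact Finset.sum_le_sum fun i _ => Finset.sum_le_sum fun j _ => psd_entry_sq_le hX i j

lemma abs_trace_mul_le {n : ℕ} (E X : Matrix (Fin n) (Fin n) ℝ) :
    |(E * X).trace| ≤ frob E * frob X := by
  have htr : (E * X).trace = ∑ q : Fin n × Fin n, E q.1 q.2 * X q.2 q.1 := by
    rw [Matrix.trace]
    simp [Matrix.mul_apply, Matrix.diag, Fintype.sum_prod_type]
  have hcs := Finset.sum_mul_sq_le_sq_mul_sq Finset.univ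
    (fun q : Fin n × Fin n => E q.1 q.2) (fun q => X q.2 q.1)
  have hE : (∑ q : Fin n × Fin n, E q.1 q.2 ^ 2) = ∑ i, ∑ j, E i j ^ 2 := by
    rw [Fintype.sum_prod_type]
  have hXs : (∑ q : Fin n × Fin n, X q.2 q.1 ^ 2) = ∑ i, ∑ j, X i j ^ 2 := by
    rw [Fintype.sum_prod_type, Finset.sum_comm]
  calc |(E * X).trace| = Real.sqrt ((E * X).trace ^ 2) := (Real.sqrt_sq_eq_abs _).symm
    _ ≤ Real.sqrt ((∑ i, ∑ j, E i j ^ 2) * ∑ i, ∑ j, X i j ^ 2) := by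
        apply Real.sqrt_le_sqrt; rw [htr, ← hE, ← hXs]; exact hcs
    _ = frob E * frob X := by
        rw [frob, frob, ← Real.sqrt_mul]
        positivity

/-- Lemma A.1: boundedness of near-optimal primal SDP solutions
under a strictly feasible dual point.  If `Σᵢ ζ̂ᵢAᵢ + Ŝ = C₀` with all eigenvalues
of `Ŝ` at least `σ > 0`, `X̂` is primal feasible, then for any `δ ∈ (0, σ/2]` and
`‖C − C₀‖_F ≤ δ`, any primal feasible `X` with
`⟨Ŝ + C − C₀, X⟩ ≤ ⟨Ŝ + C − C₀, X̂⟩` satisfies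
`‖X‖_F ≤ (2/σ)(⟨X̂, Ŝ⟩ + δ‖X̂‖_F)`. -/
theorem stmt12 (n p : ℕ) (A : Fin p → Matrix (Fin n) (Fin n) ℝ) (b : Fin p → ℝ)
    (Xhat : Matrix (Fin n) (Fin n) ℝ)
    (hXhatfeas : (∀ i, (A i * Xhat).trace = b i) ∧ Xhat.PosSemidef)
    (C₀ Shat : Matrix (Fin n) (Fin n) ℝ) (ζhat : Fin p → ℝ)
    (hdual : ∑ i, ζhat i • A i + Shat = C₀)
    (σ : ℝ) (hσ : 0 < σ)
    (hShat : Shat.IsHermitian) (hSσ : (Shat - σ • (1 : Matrix (Fin n) (Fin n) ℝ)).PosSemidef) :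
    ∀ δ : ℝ, 0 < δ → δ ≤ σ / 2 →
      ∀ C : Matrix (Fin n) (Fin n) ℝ, frob (C - C₀) ≤ δ →
        ∀ X : Matrix (Fin n) (Fin n) ℝ,
          (∀ i, (A i * X).trace = b i) → X.PosSemidef →
          ((Shat + C - C₀) * X).trace ≤ ((Shat + C - C₀) * Xhat).trace →
          frob X ≤ (2 / σ) * ((Xhat * Shat).trace + δ * frob Xhat) := by
  intro δ hδ hδσ C hC X hfeas hX hopt
  have expand : ∀ Y : Matrix (Fin n) (Fin n) ℝ,
      ((Shat + C - C₀) * Y).trace = (Shat * Y).trace + ((C - C₀) * Y).trace := by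
    intro Y
    have h1 : (Shat + C - C₀) * Y = Shat * Y + (C - C₀) * Y := by
      noncomm_ring
    rw [h1, Matrix.trace_add]
  -- bound on trace of Shat * X from below
  have hsplit : (Shat * X).trace
      = ((Shat - σ • (1 : Matrix (Fin n) (Fin n) ℝ)) * X).trace + σ * X.trace := by
    rw [Matrix.sub_mul, Matrix.trace_sub, Matrix.smul_mul, Matrix.one_mul, Matrix.trace_smul]
    simp
  have hfrobX : 0 ≤ frob X := frob_nonneg X
  have hfrobXhat : 0 ≤ frob Xhat := frob_nonneg Xhat
  have hSX : σ * frob X ≤ (Shat * X).trace := by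
    have h0 : 0 ≤ ((Shat - σ • (1 : Matrix (Fin n) (Fin n) ℝ)) * X).trace :=
      psd_trace_mul_nonneg hSσ hX
    have h1 : frob X ≤ X.trace := frob_le_trace hX
    have h2 : σ * frob X ≤ σ * X.trace := by
      exact mul_le_mul_of_nonneg_left h1 (le_of_lt hσ)
    rw [hsplit]; linarith
  have hEX : -(δ * frob X) ≤ ((C - C₀) * X).trace := by
    have h1 := abs_trace_mul_le (C - C₀) X
    have h2 : frob (C - C₀) * frob X ≤ δ * frob X :=
      mul_le_mul_of_nonneg_right hC hfrobX
    have := neg_abs_le (((C - C₀)) * X).trace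
    linarith
  have hEXhat : ((C - C₀) * Xhat).trace ≤ δ * frob Xhat := by
    have h1 := abs_trace_mul_le (C - C₀) Xhat
    have h2 : frob (C - C₀) * frob Xhat ≤ δ * frob Xhat :=
      mul_le_mul_of_nonneg_right hC hfrobXhat
    have := le_abs_self (((C - C₀)) * Xhat).trace
    linarith
  have hcomm : (Shat * Xhat).trace = (Xhat * Shat).trace := Matrix.trace_mul_comm _ _
  rw [expand X, expand Xhat] at hopt
  have hSXhat : (Shat * X).trace + ((C - C₀) * X).trace
      ≤ (Xhat * Shat).trace + δ * frob Xhat := by linarith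
  have hmain : (σ / 2) * frob X ≤ (Xhat * Shat).trace + δ * frob Xhat := by
    have : (σ / 2) * frob X ≤ (σ - δ) * frob X := by nlinarith
    nlinarith
  have h2σ : (0:ℝ) < 2 / σ := by positivity
  calc frob X = (2 / σ) * ((σ / 2) * frob X) := by field_simp
    _ ≤ (2 / σ) * ((Xhat * Shat).trace + δ * frob Xhat) :=
        mul_le_mul_of_nonneg_left hmain (le_of_lt h2σ)
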